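/- Let G have n vertices and m edges and let G_C be obtained by attaching t cycles of length r ≥ 3 at every vertex of G. Then HM(G_C) = HM(G) + 10t·M_1(G) + 32mt^2 + 16mt + 8nt^3 + 16nt^2 + (16r−24)nt. -/

import Mathlib

open Finset

variable {V : Type*}

/-- Edge set of `G` as a `Finset`, using classical decidability. -/
noncomputable def edgeFS [Fintype V] (G : SimpleGraph V) : Finset (Sym2 V) :=
  letI := Classical.decEq V
  letI : DecidableRel G.Adj := Classical.decRel _
  G.edgeFinset

/-- Degree of a vertex, using classical decidability. -/
noncomputable def deg [Fintype V] (G : SimpleGraph V) (v : V) : ℕ :=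
  letI : DecidableRel G.Adj := Classical.decRel _
  G.degree v

/-- Sum over the edges of `G` of a symmetric integer-valued function of the endpoints. -/
noncomputable def edgeSum [Fintype V] (G : SimpleGraph V) (f : V → V → ℤ)
    (hf : ∀ u v, f u v = f v u) : ℤ :=
  ∑ e ∈ edgeFS G, Sym2.lift ⟨f, hf⟩ e

/-- The hyper Zagreb index `HM(G) = Σ_{uv ∈ E(G)} (d(u)+d(v))²`. -/
noncomputable def hm [Fintype V] (G : SimpleGraph V) : ℕ :=
  ∑ e ∈ edgeFS G, Sym2.lift ⟨fun u v => (deg G u + deg G v) ^ 2,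
    fun u v => by simp [add_comm]⟩ e

/-- The first Zagreb index `M₁(G) = Σ_v d(v)²`. -/
noncomputable def m1 [Fintype V] (G : SimpleGraph V) : ℕ :=
  ∑ v, (deg G v) ^ 2


variable {V : Type*}

/-- Type-I generalized thorn graph `G_P`: attach `t v` pendant paths of order `r`
(i.e. with `r - 1` new vertices each) at each vertex `v` of `G`,
identifying `v` with an endpoint of each path. -/
def thornPath (G : SimpleGraph V) (t : V → ℕ) (r : ℕ) :
    SimpleGraph (V ⊕ ((Σ v : V, Fin (t v)) × Fin (r - 1))) where
  Adj x y :=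
    match x, y with
    | Sum.inl u, Sum.inl v => G.Adj u v
    | Sum.inl u, Sum.inr (p, j) => p.1 = u ∧ j.val = 0
    | Sum.inr (p, j), Sum.inl u => p.1 = u ∧ j.val = 0
    | Sum.inr (p, j), Sum.inr (q, j') => p = q ∧ (j.val + 1 = j'.val ∨ j'.val + 1 = j.val)
  symm := by
    constructor
    rintro (u | ⟨p, j⟩) (v | ⟨q, j'⟩) h
    · exact G.adj_symm h
    · exact h
    · exact h
    · exact ⟨h.1.symm, h.2.symm⟩
  loopless := by
    constructor
    rintro (u | ⟨p, j⟩) h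
    · exact G.irrefl h
    · omega

/-- Type-II generalized thorn graph `G_C`: attach `t v` cycles of length `r`
at each vertex `v` of `G`, identifying `v` with one vertex of each cycle. -/
def thornCycle (G : SimpleGraph V) (t : V → ℕ) (r : ℕ) :
    SimpleGraph (V ⊕ ((Σ v : V, Fin (t v)) × Fin (r - 1))) where
  Adj x y :=
    match x, y with
    | Sum.inl u, Sum.inl v => G.Adj u v
    | Sum.inl u, Sum.inr (p, j) => p.1 = u ∧ (j.val = 0 ∨ j.val = r - 2)
    | Sum.inr (p, j), Sum.inl u => p.1 = u ∧ (j.val = 0 ∨ j.val = r - 2)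
    | Sum.inr (p, j), Sum.inr (q, j') => p = q ∧ (j.val + 1 = j'.val ∨ j'.val + 1 = j.val)
  symm := by
    constructor
    rintro (u | ⟨p, j⟩) (v | ⟨q, j'⟩) h
    · exact G.adj_symm h
    · exact h
    · exact h
    · exact ⟨h.1.symm, h.2.symm⟩
  loopless := by
    constructor
    rintro (u | ⟨p, j⟩) h
    · exact G.irrefl h
    · omega

/-- Type-III generalized thorn graph `G_K`: attach `t v` copies of the complete graph `K_r`
at each vertex `v` of `G`, identifying `v` with one vertex of each copy. -/
def thornComplete (G : SimpleGraph V) (t : V → ℕ) (r : ℕ) :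
    SimpleGraph (V ⊕ ((Σ v : V, Fin (t v)) × Fin (r - 1))) where
  Adj x y :=
    match x, y with
    | Sum.inl u, Sum.inl v => G.Adj u v
    | Sum.inl u, Sum.inr (p, j) => p.1 = u
    | Sum.inr (p, j), Sum.inl u => p.1 = u
    | Sum.inr (p, j), Sum.inr (q, j') => p = q ∧ j ≠ j'
  symm := by
    constructor
    rintro (u | ⟨p, j⟩) (v | ⟨q, j'⟩) h
    · exact G.adj_symm h
    · exact h
    · exact h
    · exact ⟨h.1.symm, h.2.symm⟩
  loopless := by
    constructor
    rintro (u | ⟨p, j⟩) h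
    · exact G.irrefl h
    · exact h.2 rfl

/-- Type-IV generalized thorn graph `G_A`: attach `t v` copies of the complete bipartite
graph `K_{r,s}` at each vertex `v`, identifying `v` with one vertex of the part of size `r`. -/
def thornBipartite (G : SimpleGraph V) (t : V → ℕ) (r s : ℕ) :
    SimpleGraph (V ⊕ ((Σ v : V, Fin (t v)) × (Fin (r - 1) ⊕ Fin s))) where
  Adj x y :=
    match x, y with
    | Sum.inl u, Sum.inl v => G.Adj u v
    | Sum.inl u, Sum.inr (p, x) => p.1 = u ∧ x.isRight
    | Sum.inr (p, x), Sum.inl u => p.1 = u ∧ x.isRight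
    | Sum.inr (p, x), Sum.inr (q, y) => p = q ∧ x.isLeft ≠ y.isLeft
  symm := by
    constructor
    rintro (u | ⟨p, x⟩) (v | ⟨q, y⟩) h
    · exact G.adj_symm h
    · exact h
    · exact h
    · exact ⟨h.1.symm, h.2.symm⟩
  loopless := by
    constructor
    rintro (u | ⟨p, x⟩) h
    · exact G.irrefl h
    · exact h.2 rfl

/-- Type-V generalized thorn graph `G_{C'}`: join `t v` disjoint copies of the cycle `C_r`
to each vertex `v` of `G`, each by a new bridge edge. -/
def joinedCycle (G : SimpleGraph V) (t : V → ℕ) (r : ℕ) :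
    SimpleGraph (V ⊕ ((Σ v : V, Fin (t v)) × Fin r)) where
  Adj x y :=
    match x, y with
    | Sum.inl u, Sum.inl v => G.Adj u v
    | Sum.inl u, Sum.inr (p, j) => p.1 = u ∧ j.val = 0
    | Sum.inr (p, j), Sum.inl u => p.1 = u ∧ j.val = 0
    | Sum.inr (p, j), Sum.inr (q, j') =>
        p = q ∧ j ≠ j' ∧ ((j.val + 1) % r = j'.val ∨ (j'.val + 1) % r = j.val)
  symm := by
    constructor
    rintro (u | ⟨p, j⟩) (v | ⟨q, j'⟩) h
    · exact G.adj_symm h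
    · exact h
    · exact h
    · exact ⟨h.1.symm, h.2.1.symm, h.2.2.symm⟩
  loopless := by
    constructor
    rintro (u | ⟨p, j⟩) h
    · exact G.irrefl h
    · exact h.2.1 rfl

/-- Type-VI generalized thorn graph `G_{K'}`: join `t v` disjoint copies of the complete
graph `K_r` to each vertex `v` of `G`, each by a new bridge edge. -/
def joinedComplete (G : SimpleGraph V) (t : V → ℕ) (r : ℕ) :
    SimpleGraph (V ⊕ ((Σ v : V, Fin (t v)) × Fin r)) where
  Adj x y :=
    match x, y with
    | Sum.inl u, Sum.inl v => G.Adj u v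
    | Sum.inl u, Sum.inr (p, j) => p.1 = u ∧ j.val = 0
    | Sum.inr (p, j), Sum.inl u => p.1 = u ∧ j.val = 0
    | Sum.inr (p, j), Sum.inr (q, j') => p = q ∧ j ≠ j'
  symm := by
    constructor
    rintro (u | ⟨p, j⟩) (v | ⟨q, j'⟩) h
    · exact G.adj_symm h
    · exact h
    · exact h
    · exact ⟨h.1.symm, h.2.symm⟩
  loopless := by
    constructor
    rintro (u | ⟨p, j⟩) h
    · exact G.irrefl h
    · exact h.2 rfl


section Aux
open Finset

lemma two_mul_sum_edges {V : Type*} [Fintype V] [DecidableEq V] (G : SimpleGraph V)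
    [DecidableRel G.Adj] (f : V → V → ℤ) (hf : ∀ u v, f u v = f v u) :
    2 * ∑ e ∈ G.edgeFinset, Sym2.lift ⟨f, hf⟩ e
      = ∑ v, ∑ w ∈ G.neighborFinset v, f v w := by
  have h1 : ∑ v, ∑ w ∈ G.neighborFinset v, f v w = ∑ d : G.Dart, f d.fst d.snd := by
    rw [Finset.sum_sigma']
    refine Finset.sum_bij' (i := fun p hp => (⟨(p.1, p.2), by
        simp only [Finset.mem_sigma, Finset.mem_univ, true_and,
          SimpleGraph.mem_neighborFinset] at hp; exact hp⟩ : G.Dart))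
      (j := fun d _ => ⟨d.fst, d.snd⟩) ?_ ?_ ?_ ?_ ?_
    · intros; simp
    · rintro d _
      simp only [Finset.mem_sigma, Finset.mem_univ, true_and,
        SimpleGraph.mem_neighborFinset]
      exact d.adj
    · intros; rfl
    · intro d _; rfl
    · intros; rfl
  have h2 : ∑ d : G.Dart, f d.fst d.snd = ∑ d : G.Dart, Sym2.lift ⟨f, hf⟩ d.edge := by
    refine Finset.sum_congr rfl fun d _ => ?_
    obtain ⟨⟨a, b⟩, h⟩ := d
    simp [SimpleGraph.Dart.edge]
  have h3 : ∑ d : G.Dart, Sym2.lift ⟨f, hf⟩ d.edge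
      = ∑ e ∈ G.edgeFinset, ∑ _d ∈ ({d : G.Dart | d.edge = e} : Finset _),
          Sym2.lift ⟨f, hf⟩ e := by
    rw [← Finset.sum_fiberwise_of_maps_to (g := SimpleGraph.Dart.edge)
      (t := G.edgeFinset)
      (fun d _ => by rw [SimpleGraph.mem_edgeFinset]; exact d.edge_mem)]
    refine Finset.sum_congr rfl fun e _ => Finset.sum_congr rfl fun d hd => ?_
    simp only [Finset.mem_filter] at hd
    rw [hd.2]
  rw [h1, h2, h3, Finset.mul_sum]
  refine Finset.sum_congr rfl fun e he => ?_
  rw [Finset.sum_const, G.dart_edge_fiber_card e (by rwa [← SimpleGraph.mem_edgeFinset])]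
  simp [two_mul]

lemma deg_eq_degree {V : Type*} [Fintype V] (G : SimpleGraph V) [DecidableRel G.Adj] (v : V) :
    deg G v = G.degree v := by
  unfold deg
  congr!

lemma edgeFS_eq {V : Type*} [Fintype V] [DecidableEq V] (G : SimpleGraph V)
    [DecidableRel G.Adj] : edgeFS G = G.edgeFinset := by
  unfold edgeFS
  congr!

lemma deg_eq_sum {V : Type*} [Fintype V] (G : SimpleGraph V) [DecidableEq V]
    [DecidableRel G.Adj] (v : V) :
    (deg G v : ℤ) = ∑ w : V, if G.Adj v w then (1:ℤ) else 0 := by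
  rw [deg_eq_degree, SimpleGraph.degree, SimpleGraph.neighborFinset_eq_filter,
    Finset.card_filter]
  push_cast
  rfl

lemma two_mul_hm {V : Type*} [Fintype V] [DecidableEq V] (G : SimpleGraph V)
    [DecidableRel G.Adj] :
    (2:ℤ) * hm G = ∑ v, ∑ w : V, if G.Adj v w then ((deg G v : ℤ) + deg G w)^2 else 0 := by
  have h := two_mul_sum_edges G (fun u w => ((deg G u : ℤ) + deg G w)^2)
    (fun u w => by ring)
  unfold hm
  rw [edgeFS_eq, Nat.cast_sum]
  calc 2 * ∑ e ∈ G.edgeFinset,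
        ((Sym2.lift ⟨fun u v => (deg G u + deg G v) ^ 2, fun u v => by simp [add_comm]⟩ e : ℕ) : ℤ)
      = 2 * ∑ e ∈ G.edgeFinset,
        Sym2.lift ⟨fun u w => ((deg G u : ℤ) + deg G w)^2, fun u w => by ring⟩ e := by
        congr 1
        refine Finset.sum_congr rfl fun e _ => ?_
        induction e using Sym2.ind with | _ u w => simp
    _ = ∑ v, ∑ w ∈ G.neighborFinset v, ((deg G v : ℤ) + deg G w)^2 := h
    _ = _ := by
        refine Finset.sum_congr rfl fun v _ => ?_
        rw [SimpleGraph.neighborFinset_eq_filter, Finset.sum_filter]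

lemma deg_mul_const {V : Type*} [Fintype V] (G : SimpleGraph V) [DecidableRel G.Adj]
    (F : V → ℤ) (v : V) :
    ∑ w : V, (if G.Adj v w then F v else 0) = (G.degree v : ℤ) * F v := by
  rw [← Finset.sum_filter, Finset.sum_const,
    SimpleGraph.degree, SimpleGraph.neighborFinset_eq_filter]
  simp [mul_comm]

lemma sum_sum_adj_right {V : Type*} [Fintype V] (G : SimpleGraph V) [DecidableRel G.Adj]
    (F : V → ℤ) :
    ∑ v, ∑ w : V, (if G.Adj v w then F w else 0) = ∑ w, (G.degree w : ℤ) * F w := by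
  rw [Finset.sum_comm]
  refine Finset.sum_congr rfl fun w _ => ?_
  have h : ∀ v, (if G.Adj v w then F w else 0) = if G.Adj w v then F w else 0 := by
    intro v; by_cases hadj : G.Adj w v <;> simp [hadj, G.adj_comm v w]
  rw [Finset.sum_congr rfl fun v _ => h v]
  exact deg_mul_const G F w

lemma sum_sum_adj_left {V : Type*} [Fintype V] (G : SimpleGraph V) [DecidableRel G.Adj]
    (F : V → ℤ) :
    ∑ v, ∑ w : V, (if G.Adj v w then F v else 0) = ∑ v, (G.degree v : ℤ) * F v :=
  Finset.sum_congr rfl fun v _ => deg_mul_const G F v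


lemma count_ends (r : ℕ) (hr : 3 ≤ r) (c : ℤ) :
    ∑ j : Fin (r-1), (if (j.val = 0 ∨ j.val = r-2) then c else 0) = 2*c := by
  rw [Fin.sum_univ_eq_sum_range (fun k => if (k = 0 ∨ k = r-2) then c else 0)]
  have split : ∀ k ∈ Finset.range (r-1),
      (if (k = 0 ∨ k = r-2) then c else 0)
        = (if k = 0 then c else 0) + (if k = r-2 then c else 0) := by
    intro k _
    by_cases h0 : k = 0 <;> by_cases h2 : k = r-2 <;> simp [h0, h2] <;> omega
  rw [Finset.sum_congr rfl split, Finset.sum_add_distrib,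
    Finset.sum_ite_eq' (Finset.range (r-1)) 0 (fun _ => c),
    Finset.sum_ite_eq' (Finset.range (r-1)) (r-2) (fun _ => c)]
  have h0 : (0 : ℕ) ∈ Finset.range (r-1) := by simp; omega
  have h2 : (r-2) ∈ Finset.range (r-1) := by simp; omega
  rw [if_pos h0, if_pos h2]; ring

lemma count_mid (r : ℕ) (hr : 3 ≤ r) (j : ℕ) (hjr : j < r - 1) (c : ℤ) :
    ∑ j' : Fin (r-1), (if (j + 1 = j'.val ∨ j'.val + 1 = j) then c else 0)
      = (if j + 1 < r-1 then c else 0) + (if 1 ≤ j then c else 0) := by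
  rw [Fin.sum_univ_eq_sum_range (fun k => if (j + 1 = k ∨ k + 1 = j) then c else 0)]
  have split : ∀ k ∈ Finset.range (r-1),
      (if (j + 1 = k ∨ k + 1 = j) then c else 0)
        = (if k = j + 1 then c else 0) + (if (1 ≤ j ∧ k = j - 1) then c else 0) := by
    intro k _
    by_cases h2 : k + 1 = j
    · have h0 : ¬ (k = j + 1) := by omega
      have h0' : ¬ (j + 1 = k) := by omega
      have h1j : 1 ≤ j := by omega
      have hkj : k = j - 1 := by omega
      simp [h0, h0', h2, h1j, hkj]
    · by_cases h0 : j + 1 = k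
      · subst h0
        have hne : ¬ (1 ≤ j ∧ j + 1 = j - 1) := by omega
        simp [hne]
      · have h0' : ¬ (k = j + 1) := by omega
        have hne : ¬ (1 ≤ j ∧ k = j - 1) := by omega
        simp [h0, h0', h2, hne]
  rw [Finset.sum_congr rfl split, Finset.sum_add_distrib,
    Finset.sum_ite_eq' (Finset.range (r-1)) (j+1) (fun _ => c)]
  by_cases hj : 1 ≤ j
  · have heq : ∀ k ∈ Finset.range (r-1),
        (if (1 ≤ j ∧ k = j - 1) then c else 0) = (if k = j - 1 then c else 0) := by
      intro k _; simp [hj]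
    rw [Finset.sum_congr rfl heq, Finset.sum_ite_eq' (Finset.range (r-1)) (j-1) (fun _ => c)]
    have hmem : j - 1 ∈ Finset.range (r-1) := by simp; omega
    rw [if_pos hmem]
    by_cases hlt : j + 1 < r - 1
    · have : j + 1 ∈ Finset.range (r-1) := by simp; omega
      rw [if_pos this, if_pos hlt, if_pos hj]
    · have : j + 1 ∉ Finset.range (r-1) := by simp; omega
      rw [if_neg this, if_neg hlt, if_pos hj]
  · have heq : ∀ k ∈ Finset.range (r-1),
        (if (1 ≤ j ∧ k = j - 1) then c else 0) = 0 := by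
      intro k _; simp [hj]
    rw [Finset.sum_congr rfl heq, Finset.sum_const, smul_zero]
    have h0 : j = 0 := by omega
    have hlt : j + 1 < r - 1 ∨ j + 1 = r - 1 := by omega
    have hmem : (j + 1 ∈ Finset.range (r-1)) ↔ j + 1 < r - 1 := by simp
    by_cases h : j + 1 < r - 1
    · rw [if_pos (hmem.mpr h), if_pos h, if_neg hj]
    · rw [if_neg (fun hc => h (hmem.mp hc)), if_neg h, if_neg hj]

lemma count_lt (r : ℕ) (hr : 3 ≤ r) (c : ℤ) :
    ∑ j ∈ Finset.range (r-1), (if j + 1 < r-1 then c else 0) = ((r:ℤ)-2) * c := by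
  rw [← Finset.sum_filter]
  have h : (Finset.range (r-1)).filter (fun j => j + 1 < r-1) = Finset.range (r-2) := by
    ext k; simp; omega
  rw [h, Finset.sum_const, Finset.card_range, nsmul_eq_mul]
  congr 1; omega

lemma count_ge (r : ℕ) (hr : 3 ≤ r) (c : ℤ) :
    ∑ j ∈ Finset.range (r-1), (if 1 ≤ j then c else 0) = ((r:ℤ)-2) * c := by
  rw [← Finset.sum_filter]
  have h : (Finset.range (r-1)).filter (fun j => 1 ≤ j) = Finset.Ico 1 (r-1) := by
    ext k; simp; omega
  rw [h, Finset.sum_const, Nat.card_Ico, nsmul_eq_mul]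
  congr 1; omega


end Aux

section TC
variable {V : Type*} [Fintype V] [DecidableEq V] (G : SimpleGraph V) [DecidableRel G.Adj]
  (t r : ℕ)

lemma sum_adj_inl [DecidableRel (thornCycle G (fun _ => t) r).Adj] (hr : 3 ≤ r)
    (g : V → ℤ) (c : ℤ) (v : V) :
    ∑ y : V ⊕ ((Σ v : V, Fin ((fun _ => t) v)) × Fin (r-1)),
      (if (thornCycle G (fun _ => t) r).Adj (Sum.inl v) y
        then Sum.elim g (fun _ => c) y else 0)
    = (∑ w : V, if G.Adj v w then g w else 0) + (2*t) * c := by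
  rw [Fintype.sum_sum_type]
  congr 1
  · refine Finset.sum_congr rfl fun w _ => ?_
    exact if_congr Iff.rfl rfl rfl
  · rw [Fintype.sum_prod_type, ← Finset.univ_sigma_univ, Finset.sum_sigma]
    simp only [Sum.elim_inr]
    have step1 : ∀ u : V, ∑ i : Fin t, ∑ j : Fin (r-1),
        (if (thornCycle G (fun _ => t) r).Adj (Sum.inl v) (Sum.inr (⟨u, i⟩, j))
          then c else 0)
        = if u = v then (2*t) * c else 0 := by
      intro u
      by_cases huv : u = v
      · subst huv
        have : ∀ i : Fin t, ∑ j : Fin (r-1),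
            (if (thornCycle G (fun _ => t) r).Adj (Sum.inl u) (Sum.inr (⟨u, i⟩, j))
              then c else 0) = 2 * c := by
          intro i
          rw [Finset.sum_congr rfl (fun j _ => if_congr
            (show (thornCycle G (fun _ => t) r).Adj (Sum.inl u) (Sum.inr (⟨u, i⟩, j))
              ↔ (j.val = 0 ∨ j.val = r-2) by
                constructor
                · exact fun h => h.2
                · exact fun h => ⟨rfl, h⟩) rfl rfl)]
          exact count_ends r hr c
        rw [Finset.sum_congr rfl fun i _ => this i, Finset.sum_const, if_pos rfl]
        simp [mul_comm, mul_assoc, two_mul]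
        ring
      · rw [if_neg huv]
        refine Finset.sum_eq_zero fun i _ => Finset.sum_eq_zero fun j _ => ?_
        rw [if_neg]
        exact fun h => huv h.1
    rw [Finset.sum_congr rfl (fun u _ => step1 u), Finset.sum_ite_eq' Finset.univ v]
    simp

lemma sum_adj_inr [DecidableRel (thornCycle G (fun _ => t) r).Adj] (hr : 3 ≤ r)
    (g : V → ℤ) (c : ℤ) (p : Σ v : V, Fin ((fun _ => t) v)) (j : Fin (r-1)) :
    ∑ y : V ⊕ ((Σ v : V, Fin ((fun _ => t) v)) × Fin (r-1)),
      (if (thornCycle G (fun _ => t) r).Adj (Sum.inr (p, j)) y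
        then Sum.elim g (fun _ => c) y else 0)
    = (if (j.val = 0 ∨ j.val = r-2) then g p.1 else 0)
      + ((if j.val + 1 < r-1 then c else 0) + (if 1 ≤ j.val then c else 0)) := by
  rw [Fintype.sum_sum_type]
  congr 1
  · simp only [Sum.elim_inl]
    have step : ∀ u : V,
        (if (thornCycle G (fun _ => t) r).Adj (Sum.inr (p, j)) (Sum.inl u) then g u else 0)
        = if (j.val = 0 ∨ j.val = r-2) then (if p.1 = u then g u else 0) else 0 := by
      intro u
      by_cases hc : (j.val = 0 ∨ j.val = r-2) <;> by_cases hp : p.1 = u <;>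
        simp_all [show (thornCycle G (fun _ => t) r).Adj (Sum.inr (p, j)) (Sum.inl u)
          ↔ (p.1 = u ∧ (j.val = 0 ∨ j.val = r-2)) from Iff.rfl]
    rw [Finset.sum_congr rfl fun u _ => step u]
    by_cases hc : (j.val = 0 ∨ j.val = r-2)
    · simp only [if_pos hc]
      rw [Finset.sum_ite_eq Finset.univ p.1 g]
      simp
    · simp [hc]
  · simp only [Sum.elim_inr]
    rw [Fintype.sum_prod_type_right]
    have step : ∀ j' : Fin (r-1),
        (∑ q : Σ v : V, Fin ((fun _ => t) v),
          if (thornCycle G (fun _ => t) r).Adj (Sum.inr (p, j)) (Sum.inr (q, j')) then c else 0)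
        = if (j.val + 1 = j'.val ∨ j'.val + 1 = j.val) then c else 0 := by
      intro j'
      have h1 : ∀ q, ((thornCycle G (fun _ => t) r).Adj (Sum.inr (p, j)) (Sum.inr (q, j')))
          ↔ (p = q ∧ (j.val + 1 = j'.val ∨ j'.val + 1 = j.val)) := fun q => Iff.rfl
      by_cases hc : (j.val + 1 = j'.val ∨ j'.val + 1 = j.val)
      · rw [if_pos hc]
        have : ∀ q, (if (thornCycle G (fun _ => t) r).Adj (Sum.inr (p, j)) (Sum.inr (q, j'))
            then c else 0) = if p = q then c else 0 := by
          intro q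
          by_cases hq : p = q <;> simp_all [h1]
        rw [Finset.sum_congr rfl fun q _ => this q, Finset.sum_ite_eq Finset.univ p]
        simp
      · rw [if_neg hc]
        refine Finset.sum_eq_zero fun q _ => ?_
        rw [if_neg]
        exact fun h => hc ((h1 q).mp h).2
    rw [Finset.sum_congr rfl fun j' _ => step j']
    exact count_mid r hr j.val j.isLt c


lemma degH [DecidableRel (thornCycle G (fun _ => t) r).Adj] (hr : 3 ≤ r)
    (x : V ⊕ ((Σ v : V, Fin ((fun _ => t) v)) × Fin (r-1))) :
    (deg (thornCycle G (fun _ => t) r) x : ℤ)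
      = Sum.elim (fun v => (deg G v : ℤ) + 2*t) (fun _ => (2:ℤ)) x := by
  letI : DecidableEq (V ⊕ ((Σ v : V, Fin ((fun _ => t) v)) × Fin (r-1))) := Classical.decEq _
  rw [deg_eq_sum]
  have hrw : ∀ y, (if (thornCycle G (fun _ => t) r).Adj x y then (1:ℤ) else 0)
      = if (thornCycle G (fun _ => t) r).Adj x y
          then Sum.elim (fun _ : V => (1:ℤ)) (fun _ => (1:ℤ)) y else 0 := by
    intro y; cases y <;> rfl
  rw [Finset.sum_congr rfl fun y _ => hrw y]
  cases x with
  | inl v =>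
    rw [sum_adj_inl G t r hr _ 1 v, Sum.elim_inl, ← deg_eq_sum G v]
    ring
  | inr pj =>
    obtain ⟨p, j⟩ := pj
    rw [sum_adj_inr G t r hr _ 1 p j, Sum.elim_inr]
    have hlt := j.isLt
    split_ifs <;> omega

end TC

theorem hyperZagreb_thornCycle_uniform {V : Type*} [Fintype V] (G : SimpleGraph V)
    (t r : ℕ) (hr : 3 ≤ r) (n m : ℕ) (hn : n = Fintype.card V) (hm' : m = (edgeFS G).card) :
    (hm (thornCycle G (fun _ => t) r) : ℤ) =
      hm G + 10 * t * m1 G + 32 * m * t ^ 2 + 16 * m * t + 8 * n * t ^ 3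
        + 16 * n * t ^ 2 + (16 * (r : ℤ) - 24) * n * t := by
  letI : DecidableEq V := Classical.decEq V
  letI : DecidableRel G.Adj := Classical.decRel _
  letI : DecidableEq (V ⊕ ((Σ v : V, Fin ((fun _ => t) v)) × Fin (r-1))) := Classical.decEq _
  letI : DecidableRel (thornCycle G (fun _ => t) r).Adj := Classical.decRel _
  set d : V → ℤ := fun v => (deg G v : ℤ) with hd
  -- base identities
  have hdeg2m : ∑ v, d v = 2 * (m:ℤ) := by
    calc ∑ v, d v = ((∑ v, G.degree v : ℕ) : ℤ) := by
          rw [Nat.cast_sum]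
          refine Finset.sum_congr rfl fun v _ => ?_
          show ((deg G v : ℕ) : ℤ) = ((G.degree v : ℕ) : ℤ)
          rw [deg_eq_degree]
      _ = 2 * (m:ℤ) := by
          rw [SimpleGraph.sum_degrees_eq_twice_card_edges, hm', edgeFS_eq]
          push_cast; ring
  have hm1 : ∑ v, (d v)^2 = (m1 G : ℤ) := by
    rw [m1, Nat.cast_sum]; push_cast; rfl
  have hn' : ∑ _v : V, (1:ℤ) = (n:ℤ) := by simp [hn]
  have E3 : ∑ v, ∑ w : V, (if G.Adj v w then (1:ℤ) else 0) = 2*(m:ℤ) := by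
    rw [sum_sum_adj_left G (fun _ => (1:ℤ))]
    calc ∑ v, (G.degree v:ℤ) * 1
        = ∑ v, d v := Finset.sum_congr rfl fun v _ => by
          show ((G.degree v : ℕ) : ℤ) * 1 = ((deg G v : ℕ) : ℤ)
          rw [deg_eq_degree]; ring
      _ = 2*(m:ℤ) := hdeg2m
  have E2 : ∑ v, ∑ w : V, (if G.Adj v w then d v + d w else 0) = 2 * (m1 G : ℤ) := by
    have split : ∀ v w : V, (if G.Adj v w then d v + d w else 0)
        = (if G.Adj v w then d v else 0) + (if G.Adj v w then d w else 0) := by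
      intro v w; by_cases h : G.Adj v w <;> simp [h]
    rw [Finset.sum_congr rfl fun v _ => Finset.sum_congr rfl fun w _ => split v w]
    rw [Finset.sum_congr rfl fun v _ => Finset.sum_add_distrib, Finset.sum_add_distrib,
      sum_sum_adj_left G d, sum_sum_adj_right G d]
    have hdd : ∀ v, (G.degree v:ℤ) * d v = (d v)^2 := by
      intro v
      show ((G.degree v : ℕ) : ℤ) * ((deg G v : ℕ) : ℤ) = ((deg G v : ℕ) : ℤ)^2
      rw [deg_eq_degree]; ring
    rw [Finset.sum_congr rfl fun v _ => hdd v, hm1]; ring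
  have E1 : ∑ v, ∑ w : V, (if G.Adj v w then (d v + d w)^2 else 0) = 2 * (hm G:ℤ) :=
    (two_mul_hm G).symm
  -- main computation
  refine mul_left_cancel₀ (two_ne_zero) ?_
  rw [two_mul_hm (thornCycle G (fun _ => t) r)]
  have hdegH := degH G t r hr
  have step1 : ∀ x y, (if (thornCycle G (fun _ => t) r).Adj x y
      then ((deg (thornCycle G (fun _ => t) r) x : ℤ)
        + (deg (thornCycle G (fun _ => t) r) y : ℤ))^2 else 0)
      = if (thornCycle G (fun _ => t) r).Adj x y
        then ((Sum.elim (fun v => d v + 2*t) (fun _ => (2:ℤ)) x)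
          + (Sum.elim (fun v => d v + 2*t) (fun _ => (2:ℤ)) y))^2 else 0 := by
    intro x y; rw [hdegH x, hdegH y]
  rw [Finset.sum_congr rfl fun x _ => Finset.sum_congr rfl fun y _ => step1 x y,
    Fintype.sum_sum_type]
  beta_reduce
  -- the inl part
  have partI : ∀ v : V, ∑ y : V ⊕ ((Σ v : V, Fin ((fun _ => t) v)) × Fin (r-1)),
      (if (thornCycle G (fun _ => t) r).Adj (Sum.inl v) y
        then ((Sum.elim (fun v => d v + 2*t) (fun _ => (2:ℤ)) (Sum.inl v : V ⊕ ((Σ v : V, Fin ((fun _ => t) v)) × Fin (r-1))))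
          + (Sum.elim (fun v => d v + 2*t) (fun _ => (2:ℤ)) y))^2 else 0)
      = (∑ w : V, if G.Adj v w then (d v + d w + 4*t)^2 else 0)
          + (2*t) * (d v + 2*t + 2)^2 := by
    intro v
    have hrw : ∀ y : V ⊕ ((Σ v : V, Fin ((fun _ => t) v)) × Fin (r-1)), ((Sum.elim (fun v => d v + 2*t) (fun _ => (2:ℤ)) (Sum.inl v : V ⊕ ((Σ v : V, Fin ((fun _ => t) v)) × Fin (r-1))))
          + (Sum.elim (fun v => d v + 2*t) (fun _ => (2:ℤ)) y))^2
        = Sum.elim (fun w => (d v + d w + 4*t)^2) (fun _ => (d v + 2*t + 2)^2) y := by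
      intro y
      cases y with
      | inl w => simp only [Sum.elim_inl]; try ring
      | inr q => simp only [Sum.elim_inl, Sum.elim_inr]; try ring
    have : ∀ y : V ⊕ ((Σ v : V, Fin ((fun _ => t) v)) × Fin (r-1)), (if (thornCycle G (fun _ => t) r).Adj (Sum.inl v) y
        then ((Sum.elim (fun v => d v + 2*t) (fun _ => (2:ℤ)) (Sum.inl v : V ⊕ ((Σ v : V, Fin ((fun _ => t) v)) × Fin (r-1))))
          + (Sum.elim (fun v => d v + 2*t) (fun _ => (2:ℤ)) y))^2 else 0)
        = (if (thornCycle G (fun _ => t) r).Adj (Sum.inl v) y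
          then Sum.elim (fun w => (d v + d w + 4*t)^2) (fun _ => (d v + 2*t + 2)^2) y else 0) := by
      intro y; rw [hrw y]
    rw [Finset.sum_congr rfl fun y _ => this y,
      sum_adj_inl G t r hr (fun w => (d v + d w + 4*t)^2) ((d v + 2*t + 2)^2) v]
  -- the inr part
  have partII : ∀ pj : (Σ v : V, Fin ((fun _ => t) v)) × Fin (r-1),
      ∑ y : V ⊕ ((Σ v : V, Fin ((fun _ => t) v)) × Fin (r-1)),
      (if (thornCycle G (fun _ => t) r).Adj (Sum.inr pj) y
        then ((Sum.elim (fun v => d v + 2*t) (fun _ => (2:ℤ)) (Sum.inr pj : V ⊕ ((Σ v : V, Fin ((fun _ => t) v)) × Fin (r-1))))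
          + (Sum.elim (fun v => d v + 2*t) (fun _ => (2:ℤ)) y))^2 else 0)
      = (if (pj.2.val = 0 ∨ pj.2.val = r-2) then (d pj.1.1 + 2*t + 2)^2 else 0)
        + ((if pj.2.val + 1 < r-1 then (16:ℤ) else 0) + (if 1 ≤ pj.2.val then (16:ℤ) else 0)) := by
    rintro ⟨p, j⟩
    have hrw : ∀ y : V ⊕ ((Σ v : V, Fin ((fun _ => t) v)) × Fin (r-1)), ((Sum.elim (fun v => d v + 2*t) (fun _ => (2:ℤ)) (Sum.inr (p, j) : V ⊕ ((Σ v : V, Fin ((fun _ => t) v)) × Fin (r-1))))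
          + (Sum.elim (fun v => d v + 2*t) (fun _ => (2:ℤ)) y))^2
        = Sum.elim (fun u => (d u + 2*t + 2)^2) (fun _ => (16:ℤ)) y := by
      intro y
      cases y with
      | inl w => simp only [Sum.elim_inl, Sum.elim_inr]; try ring
      | inr q => simp only [Sum.elim_inr]; try ring
    have : ∀ y : V ⊕ ((Σ v : V, Fin ((fun _ => t) v)) × Fin (r-1)), (if (thornCycle G (fun _ => t) r).Adj (Sum.inr (p, j)) y
        then ((Sum.elim (fun v => d v + 2*t) (fun _ => (2:ℤ)) (Sum.inr (p, j) : V ⊕ ((Σ v : V, Fin ((fun _ => t) v)) × Fin (r-1))))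
          + (Sum.elim (fun v => d v + 2*t) (fun _ => (2:ℤ)) y))^2 else 0)
        = (if (thornCycle G (fun _ => t) r).Adj (Sum.inr (p, j)) y
          then Sum.elim (fun u => (d u + 2*t + 2)^2) (fun _ => (16:ℤ)) y else 0) := by
      intro y; rw [hrw y]
    rw [Finset.sum_congr rfl fun y _ => this y,
      sum_adj_inr G t r hr (fun u => (d u + 2*t + 2)^2) (16:ℤ) p j]
  rw [Finset.sum_congr rfl fun v _ => partI v,
    Finset.sum_congr rfl fun pj _ => partII pj]
  -- evaluate the inr double sum
  rw [Fintype.sum_prod_type]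
  have innerJ : ∀ p : Σ v : V, Fin ((fun _ => t) v),
      ∑ j : Fin (r-1),
        ((if (j.val = 0 ∨ j.val = r-2) then (d p.1 + 2*t + 2)^2 else 0)
          + ((if j.val + 1 < r-1 then (16:ℤ) else 0) + (if 1 ≤ j.val then (16:ℤ) else 0)))
      = 2 * (d p.1 + 2*t + 2)^2 + (((r:ℤ)-2) * 16 + ((r:ℤ)-2) * 16) := by
    intro p
    rw [Finset.sum_add_distrib, Finset.sum_add_distrib,
      count_ends r hr ((d p.1 + 2*t + 2)^2),
      Fin.sum_univ_eq_sum_range (fun k => if k + 1 < r-1 then (16:ℤ) else 0),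
      Fin.sum_univ_eq_sum_range (fun k => if 1 ≤ k then (16:ℤ) else 0),
      count_lt r hr 16, count_ge r hr 16]
    try ring
  rw [Finset.sum_congr rfl fun p _ => innerJ p]
  -- sum over sigma: constant in Fin t
  rw [← Finset.univ_sigma_univ, Finset.sum_sigma]
  have innerI : ∀ v : V, ∑ _i : Fin t,
      (2 * (d v + 2*t + 2)^2 + (((r:ℤ)-2) * 16 + ((r:ℤ)-2) * 16))
      = (t:ℤ) * (2 * (d v + 2*t + 2)^2 + (((r:ℤ)-2) * 16 + ((r:ℤ)-2) * 16)) := by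
    intro v
    rw [Finset.sum_const, Finset.card_univ, Fintype.card_fin, nsmul_eq_mul]
  rw [Finset.sum_congr rfl fun v _ => innerI v]
  -- expand the quadratic sums
  have bigexp : ∀ v w : V, (if G.Adj v w then (d v + d w + 4*t)^2 else 0)
      = (if G.Adj v w then (d v + d w)^2 else 0)
        + (8*t) * (if G.Adj v w then (d v + d w) else 0)
        + (16*t^2) * (if G.Adj v w then (1:ℤ) else 0) := by
    intro v w
    by_cases h : G.Adj v w
    · simp only [if_pos h]; ring
    · simp [h]
  have big : ∑ v, ∑ w : V, (if G.Adj v w then (d v + d w + 4*t)^2 else 0)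
      = 2 * (hm G:ℤ) + (8*t) * (2 * (m1 G:ℤ)) + (16*t^2) * (2*(m:ℤ)) := by
    rw [Finset.sum_congr rfl fun v _ => Finset.sum_congr rfl fun w _ => bigexp v w]
    simp only [Finset.sum_add_distrib, ← Finset.mul_sum]
    rw [E1, E2, E3]
  have hS : ∑ v, (d v + 2*(t:ℤ) + 2)^2
      = (m1 G:ℤ) + (4*(t:ℤ)+4)*(2*(m:ℤ)) + ((2*(t:ℤ)+2)^2) * (n:ℤ) := by
    have e : ∀ v : V, (d v + 2*(t:ℤ) + 2)^2
        = (d v)^2 + (4*(t:ℤ)+4)*(d v) + (2*(t:ℤ)+2)^2 * 1 := fun v => by ring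
    rw [Finset.sum_congr rfl fun v _ => e v]
    simp only [Finset.sum_add_distrib, ← Finset.mul_sum]
    rw [hm1, hdeg2m, hn']
  have h1 : ∑ v, 2*(t:ℤ)*(d v + 2*(t:ℤ) + 2)^2
      = 2*(t:ℤ)*(∑ v, (d v + 2*(t:ℤ)+2)^2) := by
    rw [Finset.mul_sum]
  have h2 : ∑ v, (t:ℤ)*(2*(d v + 2*(t:ℤ) + 2)^2 + (((r:ℤ)-2)*16 + ((r:ℤ)-2)*16))
      = (t:ℤ)*(2*(∑ v, (d v + 2*(t:ℤ)+2)^2) + (((r:ℤ)-2)*16 + ((r:ℤ)-2)*16)*(n:ℤ)) := by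
    rw [← Finset.mul_sum]
    congr 1
    rw [Finset.sum_add_distrib, ← Finset.mul_sum, Finset.sum_const, Finset.card_univ,
      ← hn, nsmul_eq_mul]
    ring
  rw [Finset.sum_add_distrib, big, h1, h2, hS]
  ring
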